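/- Let (yᵢ)_{i=0}^{n} and (ŷᵢ)_{i=0}^{n} be sequences of reals with |yᵢ - ŷᵢ| ≤ Δ for all i, and suppose for each i ∈ {1,…,n} there exist reals ωᵢ₋₁, μᵢ with |ωᵢ₋₁ - ŷᵢ₋₁| ≤ Δ, |μᵢ - ŷᵢ| ≤ Δ, and μᵢ = ωᵢ₋₁ + dᵢ where dᵢ is the i-th interpolated plant effect. Then |yₙ - (y₀ + ∑_{i=1}^{n} dᵢ)| ≤ 2Δ(n+1). -/

import Mathlib

lemma aux_step (yhat d : ℕ → ℝ) (Δ : ℝ) (n : ℕ)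
    (hstep : ∀ i, 1 ≤ i → i ≤ n →
      ∃ ω μ : ℝ, |ω - yhat (i - 1)| ≤ Δ ∧ |μ - yhat i| ≤ Δ ∧ μ = ω + d i) :
    |yhat n - (yhat 0 + ∑ i ∈ Finset.Icc 1 n, d i)| ≤ 2 * Δ * n := by
  induction n with
  | zero => simp
  | succ m ih =>
    have h1 := ih (fun i hi1 hi2 => hstep i hi1 (le_trans hi2 (Nat.le_succ m)))
    obtain ⟨ω, μ, hω, hμ, hd⟩ := hstep (m + 1) (Nat.le_add_left 1 m) le_rfl
    simp only [Nat.add_sub_cancel] at hω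
    rw [Finset.sum_Icc_succ_top (Nat.le_add_left 1 m)]
    have key : |yhat (m+1) - yhat m - d (m+1)| ≤ 2 * Δ := by
      have : yhat (m+1) - yhat m - d (m+1) = (yhat (m+1) - μ) + (ω - yhat m) := by
        rw [hd]; ring
      rw [this]
      calc |(yhat (m+1) - μ) + (ω - yhat m)| ≤ |yhat (m+1) - μ| + |ω - yhat m| :=
            abs_add_le _ _
        _ ≤ Δ + Δ := by rw [abs_sub_comm] at hμ; exact add_le_add hμ hω
        _ = 2 * Δ := by ring
    have : yhat (m+1) - (yhat 0 + (∑ i ∈ Finset.Icc 1 m, d i + d (m+1))) =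
        (yhat (m+1) - yhat m - d (m+1)) + (yhat m - (yhat 0 + ∑ i ∈ Finset.Icc 1 m, d i)) := by
      ring
    rw [this]
    calc _ ≤ |yhat (m+1) - yhat m - d (m+1)| + |yhat m - (yhat 0 + ∑ i ∈ Finset.Icc 1 m, d i)| := abs_add_le _ _
      _ ≤ 2 * Δ + 2 * Δ * m := add_le_add key h1
      _ = 2 * Δ * (m + 1 : ℕ) := by push_cast; ring

theorem multi_step_variation (n : ℕ) (y yhat d : ℕ → ℝ) (Δ : ℝ) (hΔ : 0 ≤ Δ)
    (hmeas : ∀ i ≤ n, |y i - yhat i| ≤ Δ)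
    (hstep : ∀ i, 1 ≤ i → i ≤ n →
      ∃ ω μ : ℝ, |ω - yhat (i - 1)| ≤ Δ ∧ |μ - yhat i| ≤ Δ ∧ μ = ω + d i) :
    |y n - (y 0 + ∑ i ∈ Finset.Icc 1 n, d i)| ≤ 2 * Δ * (n + 1) := by
  have h1 := aux_step yhat d Δ n hstep
  have h2 := hmeas n le_rfl
  have h3 := hmeas 0 (Nat.zero_le n)
  have key : y n - (y 0 + ∑ i ∈ Finset.Icc 1 n, d i) =
      (y n - yhat n) + (yhat n - (yhat 0 + ∑ i ∈ Finset.Icc 1 n, d i)) + (yhat 0 - y 0) := by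
    ring
  rw [key]
  calc _ ≤ |(y n - yhat n) + (yhat n - (yhat 0 + ∑ i ∈ Finset.Icc 1 n, d i))| + |yhat 0 - y 0| := abs_add_le _ _
    _ ≤ |y n - yhat n| + |yhat n - (yhat 0 + ∑ i ∈ Finset.Icc 1 n, d i)| + |yhat 0 - y 0| := by
        gcongr; exact abs_add_le _ _
    _ ≤ Δ + 2 * Δ * n + Δ := by
        rw [abs_sub_comm] at h3; exact add_le_add (add_le_add h2 h1) h3
    _ = 2 * Δ * (n + 1) := by ring
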